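/- Let Σ=(X,U,φ) be a forward complete system with inputs endowed with an admissible functional ‖·‖_U satisfying condition (E), and let Assumption A1 hold. Then the following are equivalent: (a) Σ is 0-GUAS and UBEBS (i.e. UGB with respect to ‖·‖_U); (b) Σ is iISS (i.e. ISS with respect to ‖·‖_U). -/

import Mathlib

open Set Filter

/-- A (forward complete) time-varying system with inputs `Σ = (X, U, φ)`:
`U` is a set of admissible inputs containing the zero input and closed under
concatenation, and `φ` is a transition map satisfying the identity, causality
and semigroup axioms. -/
structure Sys (X Uv : Type*) [NormedAddCommGroup X] [NormedSpace ℝ X]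
    [AddCommGroup Uv] [Module ℝ Uv] where
  U : Set (ℝ → Uv)
  zero_mem : (fun _ => (0 : Uv)) ∈ U
  concat_mem : ∀ u ∈ U, ∀ v ∈ U, ∀ t : ℝ, 0 < t →
      (fun r => if r ≤ t then u r else v r) ∈ U
  phi : ℝ → ℝ → X → (ℝ → Uv) → X
  identity : ∀ t : ℝ, 0 ≤ t → ∀ x u, u ∈ U → phi t t x u = x
  causality : ∀ s t : ℝ, ∀ x : X, ∀ u v, 0 ≤ s → s < t → u ∈ U → v ∈ U →
      (∀ r, s < r → r ≤ t → v r = u r) → phi t s x v = phi t s x u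
  semigroup : ∀ s τ t : ℝ, ∀ x : X, ∀ u, 0 ≤ s → s < τ → τ < t → u ∈ U →
      phi t τ (phi τ s x u) u = phi t s x u

variable {X Uv : Type*} [NormedAddCommGroup X] [NormedSpace ℝ X]
  [AddCommGroup Uv] [Module ℝ Uv]

/-- The truncation `u_(s,t]` of an input. -/
noncomputable def trunc (u : ℝ → Uv) (s t : ℝ) : ℝ → Uv := fun r => if s < r ∧ r ≤ t then u r else 0

/-- The truncation `u_(s,∞)` of an input. -/
noncomputable def truncFrom (u : ℝ → Uv) (s : ℝ) : ℝ → Uv := fun r => if s < r then u r else 0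

/-- An admissible functional `‖·‖_U : U → [0,∞]`. -/
structure IsAdmissible (S : Sys X Uv) (nrm : (ℝ → Uv) → ENNReal) : Prop where
  zero : nrm (fun _ => (0 : Uv)) = 0
  fin : ∀ u ∈ S.U, ∀ s t : ℝ, 0 ≤ s → s < t → nrm (trunc u s t) < ⊤
  le_tail : ∀ u ∈ S.U, ∀ s t : ℝ, 0 ≤ s → s < t → nrm (trunc u s t) ≤ nrm (truncFrom u s)
  tail_le : ∀ u ∈ S.U, ∀ s : ℝ, 0 ≤ s → nrm (truncFrom u s) ≤ nrm u

/-- A function of class `K`. -/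
def ClassK (α : ℝ → ℝ) : Prop :=
  ContinuousOn α (Ici 0) ∧ StrictMonoOn α (Ici 0) ∧ α 0 = 0

/-- A function of class `K∞`. -/
def ClassKInf (α : ℝ → ℝ) : Prop := ClassK α ∧ Tendsto α atTop atTop


/-- A function of class `KL`. -/
def ClassKL (β : ℝ → ℝ → ℝ) : Prop :=
  (∀ t ≥ (0:ℝ), ClassK (fun r => β r t)) ∧
  (∀ r ≥ (0:ℝ), AntitoneOn (fun t => β r t) (Ici 0) ∧
    Tendsto (fun t => β r t) atTop (nhds 0))

/-- Assumption 1: continuity of trajectories with respect to the input at the zero input,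
uniformly over the initial time. -/
def AssumptionA1 (S : Sys X Uv) (nrm : (ℝ → Uv) → ENNReal) : Prop :=
  ∀ r > (0:ℝ), ∀ ε > (0:ℝ), ∀ T > (0:ℝ), ∃ δ > (0:ℝ),
    ∀ t0 ≥ (0:ℝ), ∀ x0 : X, ∀ u ∈ S.U, nrm u ≤ ENNReal.ofReal δ →
      ∀ tstar ∈ Icc t0 (t0 + T),
        (∀ t ∈ Icc t0 tstar,
            ‖S.phi t t0 x0 u‖ ≤ r ∧ ‖S.phi t t0 x0 (fun _ => 0)‖ ≤ r) →
        ∀ t ∈ Icc t0 tstar,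
          ‖S.phi t t0 x0 (fun _ => 0) - S.phi t t0 x0 u‖ ≤ ε

/-- The system is 0-GUAS: globally uniformly asymptotically stable under zero input. -/
def ZeroGUAS (S : Sys X Uv) : Prop :=
  ∃ β, ClassKL β ∧ ∀ t0 ≥ (0:ℝ), ∀ x0 : X, ∀ t ≥ t0,
    ‖S.phi t t0 x0 (fun _ => 0)‖ ≤ β ‖x0‖ (t - t0)

/-- The system is ISS with respect to the admissible functional `nrm`.
Inputs with infinite `nrm` satisfy the estimate trivially thanks to the
convention `ρ(∞) = ∞`, so only inputs of finite `nrm` are quantified over. -/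
def ISS (S : Sys X Uv) (nrm : (ℝ → Uv) → ENNReal) : Prop :=
  ∃ β ρ, ClassKL β ∧ ClassKInf ρ ∧
    ∀ t0 ≥ (0:ℝ), ∀ x0 : X, ∀ u ∈ S.U, nrm u < ⊤ → ∀ t ≥ t0,
      ‖S.phi t t0 x0 u‖ ≤ β ‖x0‖ (t - t0) + ρ (nrm u).toReal

/-- The system is UGB (uniformly globally bounded) with respect to `nrm`. -/
def UGB (S : Sys X Uv) (nrm : (ℝ → Uv) → ENNReal) : Prop :=
  ∃ c α ρ, 0 ≤ c ∧ ClassKInf α ∧ ClassKInf ρ ∧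
    ∀ t0 ≥ (0:ℝ), ∀ x0 : X, ∀ u ∈ S.U, nrm u < ⊤ → ∀ t ≥ t0,
      ‖S.phi t t0 x0 u‖ ≤ c + α ‖x0‖ + ρ (nrm u).toReal

/-- The system is UGS (uniformly globally stable) with respect to `nrm`, i.e. UGB with `c = 0`. -/
def UGS (S : Sys X Uv) (nrm : (ℝ → Uv) → ENNReal) : Prop :=
  ∃ α ρ, ClassKInf α ∧ ClassKInf ρ ∧
    ∀ t0 ≥ (0:ℝ), ∀ x0 : X, ∀ u ∈ S.U, nrm u < ⊤ → ∀ t ≥ t0,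
      ‖S.phi t t0 x0 u‖ ≤ α ‖x0‖ + ρ (nrm u).toReal

/-- Condition (E) on the admissible functional. -/
def CondE (S : Sys X Uv) (nrm : (ℝ → Uv) → ENNReal) : Prop :=
  ∀ u ∈ S.U, ∀ t1 t2 t3 : ℝ, 0 ≤ t1 → t1 < t2 → t2 < t3 →
    nrm (trunc u t1 t2) + nrm (trunc u t2 t3) ≤ nrm (trunc u t1 t3)

open MeasureTheory intervalIntegral

noncomputable def Av (h : ℝ → ℝ) (r : ℝ) : ℝ :=
  if r ≤ 0 then 0 else (∫ v in r..(2*r), h (max v 0)) / r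

section AvLemmas
variable {h h₁ h₂ : ℝ → ℝ}

lemma hmax_mono (hm : MonotoneOn h (Ici 0)) : Monotone (fun v => h (max v 0)) :=
  fun a b hab => hm (le_max_right a 0) (le_max_right b 0) (max_le_max hab le_rfl)

lemma Av_nonneg (hm : MonotoneOn h (Ici 0)) (hn : ∀ v, 0 ≤ v → 0 ≤ h v) (r : ℝ) :
    0 ≤ Av h r := by
  unfold Av
  split_ifs with hr
  · exact le_rfl
  · push_neg at hr
    apply div_nonneg _ hr.le
    apply intervalIntegral.integral_nonneg (by linarith)
    intro v _
    exact hn _ (le_max_right v 0)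

lemma le_Av (hm : MonotoneOn h (Ici 0)) {r : ℝ} (hr : 0 < r) : h r ≤ Av h r := by
  unfold Av
  rw [if_neg (not_le.mpr hr)]
  rw [le_div_iff₀ hr]
  have h1 : (∫ _ in r..(2*r), h r) ≤ ∫ v in r..(2*r), h (max v 0) := by
    apply intervalIntegral.integral_mono_on (by linarith)
      (intervalIntegrable_const) ((hmax_mono hm).intervalIntegrable)
    intro v hv
    exact hm hr.le (le_max_right v 0) (le_trans hv.1 (le_max_left v 0))
  calc h r * r = (2*r - r) • h r := by rw [smul_eq_mul]; ring
  _ = ∫ _ in r..(2*r), h r := (intervalIntegral.integral_const _).symm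
  _ ≤ _ := h1

lemma Av_le (hm : MonotoneOn h (Ici 0)) {r : ℝ} (hr : 0 < r) : Av h r ≤ h (2*r) := by
  unfold Av
  rw [if_neg (not_le.mpr hr), div_le_iff₀ hr]
  have h1 : (∫ v in r..(2*r), h (max v 0)) ≤ ∫ _ in r..(2*r), h (2*r) := by
    apply intervalIntegral.integral_mono_on (by linarith)
      ((hmax_mono hm).intervalIntegrable) (intervalIntegrable_const)
    intro v hv
    exact hm (le_max_right v 0) (mem_Ici.mpr (by linarith)) (max_le (by linarith [hv.2]) (by linarith))
  calc (∫ v in r..(2*r), h (max v 0)) ≤ ∫ _ in r..(2*r), h (2*r) := h1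
  _ = (2*r - r) • h (2*r) := intervalIntegral.integral_const _
  _ = h (2*r) * r := by rw [smul_eq_mul]; ring

lemma Av_eq (r : ℝ) (hr : 0 < r) : Av h r = ∫ w in (1:ℝ)..2, h (max (r*w) 0) := by
  unfold Av
  rw [if_neg (not_le.mpr hr)]
  have := intervalIntegral.integral_comp_mul_left (a := (1:ℝ)) (b := 2)
    (fun v => h (max v 0)) (ne_of_gt hr)
  rw [this, mul_one, smul_eq_mul]
  rw [div_eq_inv_mul]
  ring_nf

lemma Av_mono (hm : MonotoneOn h (Ici 0)) (hn : ∀ v, 0 ≤ v → 0 ≤ h v) :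
    MonotoneOn (Av h) (Ici 0) := by
  intro a ha b hb hab
  rcases eq_or_lt_of_le (mem_Ici.mp ha) with h0 | h0
  · rw [show Av h a = 0 by unfold Av; rw [if_pos (le_of_eq h0.symm)]]
    exact Av_nonneg hm hn b
  rw [Av_eq a h0, Av_eq b (lt_of_lt_of_le h0 hab)]
  apply intervalIntegral.integral_mono_on (by norm_num)
  · have : Monotone (fun w => h (max (a*w) 0)) :=
      fun x y hxy => hm (mem_Ici.mpr (le_max_right _ 0)) (mem_Ici.mpr (le_max_right _ 0))
        (max_le_max (mul_le_mul_of_nonneg_left hxy h0.le) le_rfl)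
    exact this.intervalIntegrable
  · have : Monotone (fun w => h (max (b*w) 0)) :=
      fun x y hxy => hm (mem_Ici.mpr (le_max_right _ 0)) (mem_Ici.mpr (le_max_right _ 0))
        (max_le_max (mul_le_mul_of_nonneg_left hxy (by linarith)) le_rfl)
    exact this.intervalIntegrable
  · intro w hw
    exact hm (mem_Ici.mpr (le_max_right _ 0)) (mem_Ici.mpr (le_max_right _ 0))
      (max_le_max (mul_le_mul_of_nonneg_right hab (by linarith [hw.1])) le_rfl)

lemma Av_mono_h (hm₁ : MonotoneOn h₁ (Ici 0)) (hm₂ : MonotoneOn h₂ (Ici 0))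
    (hle : ∀ v, 0 ≤ v → h₁ v ≤ h₂ v) (r : ℝ) : Av h₁ r ≤ Av h₂ r := by
  unfold Av
  split_ifs with hr
  · exact le_rfl
  push_neg at hr
  gcongr
  apply intervalIntegral.integral_mono_on (by linarith)
    ((hmax_mono hm₁).intervalIntegrable) ((hmax_mono hm₂).intervalIntegrable)
  intro v _
  exact hle _ (le_max_right v 0)

lemma Av_contOn (hm : MonotoneOn h (Ici 0)) (hn : ∀ v, 0 ≤ v → 0 ≤ h v)
    (hsm : ∀ ε > (0:ℝ), ∃ δ > (0:ℝ), ∀ v, 0 ≤ v → v ≤ δ → h v ≤ ε) :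
    ContinuousOn (Av h) (Ici 0) := by
  have hint : ∀ a b : ℝ, IntervalIntegrable (fun v => h (max v 0)) volume a b :=
    fun a b => (hmax_mono hm).intervalIntegrable
  set F : ℝ → ℝ := fun y => ∫ v in (0:ℝ)..y, h (max v 0) with hF
  have hFc : Continuous F := intervalIntegral.continuous_primitive hint 0
  intro x hx
  rcases eq_or_lt_of_le (mem_Ici.mp hx) with h0 | h0
  · -- continuity at 0 within Ici 0
    have hAv0 : Av h 0 = 0 := by unfold Av; rw [if_pos le_rfl]
    rw [← h0, Metric.continuousWithinAt_iff]
    intro ε hε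
    obtain ⟨δ, hδ, hδ2⟩ := hsm (ε/2) (by linarith)
    refine ⟨δ/2, by linarith, ?_⟩
    intro y hy hdy
    rw [hAv0, Real.dist_eq, sub_zero]
    rw [Real.dist_eq, sub_zero] at hdy
    have hy0 : 0 ≤ y := hy
    have hyδ : y < δ/2 := by rwa [abs_of_nonneg hy0] at hdy
    have h1 : |Av h y| = Av h y := abs_of_nonneg (Av_nonneg hm hn y)
    rw [h1]
    rcases eq_or_lt_of_le hy0 with h2 | h2
    · rw [show Av h y = 0 by unfold Av; rw [if_pos (le_of_eq h2.symm)]]; linarith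
    calc Av h y ≤ h (2*y) := Av_le hm h2
    _ ≤ ε/2 := hδ2 _ (by linarith) (by linarith)
    _ < ε := by linarith
  · -- continuity at x > 0
    apply ContinuousAt.continuousWithinAt
    have heq : ∀ᶠ y in nhds x, Av h y = (F (2*y) - F y) / y := by
      filter_upwards [eventually_gt_nhds h0] with y hy
      unfold Av
      rw [if_neg (not_le.mpr hy)]
      congr 1
      rw [← intervalIntegral.integral_interval_sub_left (hint 0 (2*y)) (hint 0 y)]
    have hca : ContinuousAt (fun y => (F (2*y) - F y) / y) x := by
      apply ContinuousAt.div
      · exact ((hFc.comp (continuous_const.mul continuous_id)).sub hFc).continuousAt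
      · exact continuousAt_id
      · exact ne_of_gt h0
    exact hca.congr (heq.mono fun y hy => hy.symm)
end AvLemmas
namespace ClassK
variable {α : ℝ → ℝ} (h : ClassK α)
include h

lemma mono {a b : ℝ} (ha : 0 ≤ a) (hab : a ≤ b) : α a ≤ α b := by
  rcases eq_or_lt_of_le hab with rfl | hlt
  · exact le_rfl
  · exact (h.2.1 (mem_Ici.mpr ha) (mem_Ici.mpr (ha.trans hab)) hlt).le

lemma nonneg {r : ℝ} (hr : 0 ≤ r) : 0 ≤ α r := by
  have := h.mono le_rfl hr
  rwa [h.2.2] at this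

lemma small {ε : ℝ} (hε : 0 < ε) : ∃ δ > (0:ℝ), ∀ v, 0 ≤ v → v ≤ δ → α v ≤ ε := by
  have hc : ContinuousWithinAt α (Ici 0) 0 := h.1 0 (mem_Ici.mpr le_rfl)
  rw [Metric.continuousWithinAt_iff] at hc
  obtain ⟨δ, hδ, hδ2⟩ := hc ε hε
  refine ⟨δ/2, by linarith, fun v hv hvδ => ?_⟩
  have := hδ2 (mem_Ici.mpr hv) (by rw [Real.dist_eq, sub_zero, abs_of_nonneg hv]; linarith)
  rw [Real.dist_eq, h.2.2, sub_zero] at this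
  calc α v ≤ |α v| := le_abs_self _
  _ ≤ ε := this.le
end ClassK

namespace ClassKL
variable {β : ℝ → ℝ → ℝ} (h : ClassKL β)
include h

lemma nonneg {r t : ℝ} (hr : 0 ≤ r) (ht : 0 ≤ t) : 0 ≤ β r t := (h.1 t ht).nonneg hr

lemma mono_r {a b t : ℝ} (ha : 0 ≤ a) (hab : a ≤ b) (ht : 0 ≤ t) : β a t ≤ β b t :=
  (h.1 t ht).mono ha hab

lemma anti_t {r a b : ℝ} (hr : 0 ≤ r) (ha : 0 ≤ a) (hab : a ≤ b) : β r b ≤ β r a :=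
  (h.2 r hr).1 (mem_Ici.mpr ha) (mem_Ici.mpr (ha.trans hab)) hab

lemma decay {r : ℝ} (hr : 0 ≤ r) {ε : ℝ} (hε : 0 < ε) :
    ∃ T > (0:ℝ), ∀ t ≥ T, β r t ≤ ε := by
  have := (h.2 r hr).2.eventually_lt_const hε
  rw [eventually_atTop] at this
  obtain ⟨T, hT⟩ := this
  exact ⟨max T 1, by positivity, fun t ht => (hT t (le_trans (le_max_left _ _) ht)).le⟩

lemma small0 {ε : ℝ} (hε : 0 < ε) : ∃ δ > (0:ℝ), ∀ r, 0 ≤ r → r ≤ δ → β r 0 ≤ ε :=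
  (h.1 0 le_rfl).small hε
end ClassKL

section SysLemmas
variable {S : Sys X Uv} {nrm : (ℝ → Uv) → ENNReal}

lemma trunc_mem (hu : u ∈ S.U) {a b : ℝ} (ha : 0 < a) (hab : a < b) :
    trunc u a b ∈ S.U := by
  have h1 : (fun r => if r ≤ b then u r else (0:Uv)) ∈ S.U :=
    S.concat_mem u hu _ S.zero_mem b (ha.trans hab)
  have h2 := S.concat_mem _ S.zero_mem _ h1 a ha
  convert h2 using 1
  funext r
  simp only [trunc]
  by_cases h4 : r ≤ a
  · rw [if_neg (by push_neg; intro h; linarith), if_pos h4]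
  · push_neg at h4
    rw [if_neg (not_le.mpr h4)]
    by_cases h5 : r ≤ b
    · rw [if_pos ⟨h4, h5⟩, if_pos h5]
    · rw [if_neg (fun hc => h5 hc.2), if_neg h5]

lemma truncFrom_mem (hu : u ∈ S.U) {a : ℝ} (ha : 0 < a) :
    truncFrom u a ∈ S.U := by
  have h2 := S.concat_mem _ S.zero_mem _ hu a ha
  convert h2 using 1
  funext r
  simp only [truncFrom]
  split_ifs with h3 h4 <;> try rfl
  · linarith
  · linarith

lemma restart (hu : u ∈ S.U) {t0 τ t : ℝ} (h0 : 0 ≤ t0) (h1 : t0 ≤ τ) (h2 : τ ≤ t) (x0 : X) :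
    S.phi t τ (S.phi τ t0 x0 u) u = S.phi t t0 x0 u := by
  rcases eq_or_lt_of_le h1 with rfl | h1
  · rw [S.identity t0 h0 x0 u hu]
  rcases eq_or_lt_of_le h2 with rfl | h2
  · exact S.identity τ (h0.trans h1.le) _ u hu
  · exact S.semigroup t0 τ t x0 u h0 h1 h2 hu

lemma trunc_self_eq_zero (u : ℝ → Uv) (a : ℝ) : trunc u a a = (fun _ => (0:Uv)) := by
  funext r; simp only [trunc]
  rw [if_neg (fun hc => absurd (hc.1.trans_le hc.2) (lt_irrefl a))]

lemma sum_trunc_le (hadm : IsAdmissible S nrm) (hE : CondE S nrm)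
    {u : ℝ → Uv} (hu : u ∈ S.U) {a Δ : ℝ} (ha : 0 ≤ a) (hΔ : 0 < Δ) (n : ℕ) :
    (∑ k ∈ Finset.range n, nrm (trunc u (a + k*Δ) (a + (k+1)*Δ)))
      ≤ nrm (trunc u a (a + n*Δ)) := by
  induction n with
  | zero => simp [trunc_self_eq_zero, hadm.zero]
  | succ n ih =>
    rw [Finset.sum_range_succ]
    rcases Nat.eq_zero_or_pos n with rfl | hn
    · simp only [Finset.range_zero, Finset.sum_empty, zero_add]
      push_cast
      norm_num
    · have h1 : a < a + n*Δ := by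
        have : (1:ℝ) ≤ n := by exact_mod_cast hn
        nlinarith
      have h2 : a + n*Δ < a + (n+1)*Δ := by nlinarith
      calc _ ≤ nrm (trunc u a (a + n*Δ)) + nrm (trunc u (a + n*Δ) (a + (n+1)*Δ)) := by
            exact add_le_add ih le_rfl
      _ ≤ _ := by
            have := hE u hu a (a + n*Δ) (a + (n+1)*Δ) ha h1 h2
            push_cast
            convert this using 3 <;> push_cast <;> ring

lemma good_window (hadm : IsAdmissible S nrm) (hE : CondE S nrm)
    {u : ℝ → Uv} (hu : u ∈ S.U) (hfin : nrm u < ⊤) {a Δ δw : ℝ} (ha : 0 < a) (hΔ : 0 < Δ)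
    (hδw : 0 < δw) (N : ℕ) (hN : (nrm u).toReal + δw ≤ (N+1) * δw) :
    ∃ k ≤ N, nrm (trunc u (a + k*Δ) (a + (k+1)*Δ)) ≤ ENNReal.ofReal δw := by
  by_contra hcon
  push_neg at hcon
  have hbig : ∀ k ∈ Finset.range (N+1), ENNReal.ofReal δw ≤ nrm (trunc u (a + k*Δ) (a + (k+1)*Δ)) := by
    intro k hk
    exact (hcon k (Nat.lt_succ_iff.mp (Finset.mem_range.mp hk))).le
  have hsum := Finset.card_nsmul_le_sum (Finset.range (N+1)) _ _ hbig
  rw [Finset.card_range] at hsum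
  have h2 : (∑ k ∈ Finset.range (N+1), nrm (trunc u (a + k*Δ) (a + (k+1)*Δ)))
      ≤ nrm u := by
    calc _ ≤ nrm (trunc u a (a + (N+1)*Δ)) := by
          have := sum_trunc_le hadm hE hu ha.le hΔ (N+1)
          push_cast at this ⊢
          exact this
    _ ≤ nrm (truncFrom u a) := hadm.le_tail u hu a _ ha.le (by nlinarith [Nat.cast_nonneg (α := ℝ) N])
    _ ≤ nrm u := hadm.tail_le u hu a ha.le
  have h3 : ((N+1) : ℕ) • ENNReal.ofReal δw ≤ ENNReal.ofReal ((nrm u).toReal) := by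
    rw [ENNReal.ofReal_toReal hfin.ne]
    exact hsum.trans h2
  rw [nsmul_eq_mul] at h3
  have h4 : ENNReal.ofReal ((N+1) * δw) ≤ ENNReal.ofReal ((nrm u).toReal) := by
    rw [ENNReal.ofReal_mul (by positivity)]
    convert h3 using 2
    push_cast
    rw [ENNReal.ofReal_add (by positivity) zero_le_one]
    simp [ENNReal.ofReal_natCast]
  rw [ENNReal.ofReal_le_ofReal_iff ENNReal.toReal_nonneg] at h4
  have : 0 < δw := hδw
  push_cast at h4
  linarith
end SysLemmas

section Core
variable {S : Sys X Uv} {nrm : (ℝ → Uv) → ENNReal}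
variable {β₀ : ℝ → ℝ → ℝ} {c : ℝ} {α₀ ρ₀ : ℝ → ℝ}

/-- Stability predicate: all trajectories from states and inputs of size `δ` stay below `ε`. -/
def Pstab (S : Sys X Uv) (nrm : (ℝ → Uv) → ENNReal) (δ ε : ℝ) : Prop :=
  ∀ t0 ≥ (0:ℝ), ∀ x0 : X, ‖x0‖ ≤ δ → ∀ u ∈ S.U, nrm u ≤ ENNReal.ofReal δ →
    ∀ t ≥ t0, ‖S.phi t t0 x0 u‖ ≤ ε

lemma Pstab_anti {δ' δ ε : ℝ} (h : δ' ≤ δ) (hP : Pstab S nrm δ ε) : Pstab S nrm δ' ε :=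
  fun t0 ht0 x0 hx0 u hu hnu t ht =>
    hP t0 ht0 x0 (hx0.trans h) u hu (hnu.trans (ENNReal.ofReal_le_ofReal h)) t ht

lemma SL1 (hA1 : AssumptionA1 S nrm) (hβ : ClassKL β₀)
    (hG : ∀ t0 ≥ (0:ℝ), ∀ x0 : X, ∀ t ≥ t0, ‖S.phi t t0 x0 (fun _ => 0)‖ ≤ β₀ ‖x0‖ (t - t0))
    (hU : ∀ t0 ≥ (0:ℝ), ∀ x0 : X, ∀ u ∈ S.U, nrm u < ⊤ → ∀ t ≥ t0,
      ‖S.phi t t0 x0 u‖ ≤ c + α₀ ‖x0‖ + ρ₀ (nrm u).toReal)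
    (hαK : ClassK α₀) (hρK : ClassK ρ₀) (hc : 0 ≤ c)
    {R εw Tw : ℝ} (hR : 0 < R) (hεw : 0 < εw) (hTw : 0 < Tw) :
    ∃ δw, 0 < δw ∧ δw ≤ 1 ∧ ∀ τ ≥ (0:ℝ), ∀ y : X, ‖y‖ ≤ R → ∀ w ∈ S.U,
      nrm w ≤ ENNReal.ofReal δw →
      ∀ t ∈ Icc τ (τ + Tw), ‖S.phi t τ y w‖ ≤ β₀ ‖y‖ (t - τ) + εw := by
  set r' : ℝ := c + α₀ R + ρ₀ 1 + β₀ R 0 + 1 with hr'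
  have hr'pos : 0 < r' := by
    have h1 := hαK.nonneg hR.le
    have h2 := hρK.nonneg (zero_le_one)
    have h3 := hβ.nonneg hR.le (le_refl 0)
    positivity
  obtain ⟨δ, hδ, hA⟩ := hA1 r' hr'pos εw hεw Tw hTw
  refine ⟨min δ 1, by positivity, min_le_right _ _, ?_⟩
  intro τ hτ y hy w hw hnw t ht
  have hnw' : nrm w ≤ ENNReal.ofReal δ :=
    hnw.trans (ENNReal.ofReal_le_ofReal (min_le_left _ _))
  have hfin : nrm w < ⊤ := lt_of_le_of_lt hnw' (ENNReal.ofReal_lt_top)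
  have hsw : (nrm w).toReal ≤ 1 := by
    have := ENNReal.toReal_le_of_le_ofReal (by positivity) hnw
    exact this.trans (min_le_right _ _)
  have hyn : (0:ℝ) ≤ ‖y‖ := norm_nonneg y
  have hpre : ∀ s ∈ Icc τ (τ + Tw),
      ‖S.phi s τ y w‖ ≤ r' ∧ ‖S.phi s τ y (fun _ => 0)‖ ≤ r' := by
    intro s hs
    constructor
    · have h1 := hU τ hτ y w hw hfin s hs.1
      have h2 : α₀ ‖y‖ ≤ α₀ R := hαK.mono hyn hy
      have h3 : ρ₀ (nrm w).toReal ≤ ρ₀ 1 := hρK.mono ENNReal.toReal_nonneg hsw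
      have h4 : 0 ≤ β₀ R 0 := hβ.nonneg hR.le le_rfl
      rw [hr']; linarith
    · have h1 := hG τ hτ y s hs.1
      have h2 : β₀ ‖y‖ (s - τ) ≤ β₀ ‖y‖ 0 := hβ.anti_t hyn le_rfl (by linarith [hs.1])
      have h3 : β₀ ‖y‖ 0 ≤ β₀ R 0 := hβ.mono_r hyn hy le_rfl
      have h4 : 0 ≤ α₀ R := hαK.nonneg hR.le
      have h5 : 0 ≤ ρ₀ 1 := hρK.nonneg zero_le_one
      rw [hr']; linarith
  have hcon := hA τ hτ y w hw hnw' (τ + Tw) ⟨by linarith, le_refl _⟩ hpre t ht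
  have h6 : ‖S.phi t τ y w‖ - ‖S.phi t τ y (fun _ => 0)‖
      ≤ ‖(S.phi t τ y (fun _ => 0)) - S.phi t τ y w‖ := by
    rw [norm_sub_rev]
    exact norm_sub_norm_le _ _
  have h7 := hG τ hτ y t ht.1
  linarith

lemma stab_small (hA1 : AssumptionA1 S nrm) (hβ : ClassKL β₀)
    (hG : ∀ t0 ≥ (0:ℝ), ∀ x0 : X, ∀ t ≥ t0, ‖S.phi t t0 x0 (fun _ => 0)‖ ≤ β₀ ‖x0‖ (t - t0))
    (hU : ∀ t0 ≥ (0:ℝ), ∀ x0 : X, ∀ u ∈ S.U, nrm u < ⊤ → ∀ t ≥ t0,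
      ‖S.phi t t0 x0 u‖ ≤ c + α₀ ‖x0‖ + ρ₀ (nrm u).toReal)
    (hαK : ClassK α₀) (hρK : ClassK ρ₀) (hc : 0 ≤ c)
    {ε : ℝ} (hε : 0 < ε) :
    ∃ δ, 0 < δ ∧ δ ≤ min ε 1 ∧ Pstab S nrm δ ε := by
  obtain ⟨δ₀, hδ₀, hδ₀2⟩ := hβ.small0 (by linarith : (0:ℝ) < ε/2)
  set μ : ℝ := min δ₀ (min ε 1) with hμdef
  have hμ : 0 < μ := by positivity
  have hμδ₀ : μ ≤ δ₀ := min_le_left _ _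
  have hμε : μ ≤ ε := (min_le_right _ _).trans (min_le_left _ _)
  have hμ1 : μ ≤ 1 := (min_le_right _ _).trans (min_le_right _ _)
  have hβμ0 : β₀ μ 0 ≤ ε/2 := hδ₀2 μ hμ.le hμδ₀
  obtain ⟨Tw, hTw, hTw2⟩ := hβ.decay hμ.le (by linarith : (0:ℝ) < μ/2)
  obtain ⟨δw, hδw, hδw1, hSL⟩ := SL1 hA1 hβ hG hU hαK hρK hc
    (one_pos) (by linarith : (0:ℝ) < μ/2) hTw
  refine ⟨min μ δw, by positivity, (min_le_left _ _).trans (min_le_right _ _), ?_⟩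
  intro t0 ht0 x0 hx0 u hu hnu t ht
  have hnu' : nrm u ≤ ENNReal.ofReal δw :=
    hnu.trans (ENNReal.ofReal_le_ofReal (min_le_right _ _))
  -- induction: states at window boundaries stay ≤ μ
  have hind : ∀ k : ℕ, ‖S.phi (t0 + k*Tw) t0 x0 u‖ ≤ μ := by
    intro k
    induction k with
    | zero =>
      simp only [Nat.cast_zero, zero_mul, add_zero]
      rw [S.identity t0 ht0 x0 u hu]
      exact hx0.trans (min_le_left _ _)
    | succ k ih =>
      set τk : ℝ := t0 + k*Tw with hτk
      have hτk0 : (0:ℝ) ≤ τk := by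
        have : (0:ℝ) ≤ (k:ℝ)*Tw := by positivity
        linarith
      have hb := hSL τk hτk0 _ (ih.trans hμ1) u hu hnu' (τk + Tw)
        ⟨by linarith, le_refl _⟩
      have heq : S.phi (τk + Tw) τk (S.phi τk t0 x0 u) u = S.phi (τk + Tw) t0 x0 u :=
        restart hu ht0 (le_add_of_nonneg_right (by positivity)) (by linarith) x0
      rw [heq] at hb
      have h1 : β₀ ‖S.phi τk t0 x0 u‖ (τk + Tw - τk) ≤ β₀ μ Tw := by
        rw [show τk + Tw - τk = Tw by ring]
        exact hβ.mono_r (norm_nonneg _) ih hTw.le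
      have h2 : β₀ μ Tw ≤ μ/2 := hTw2 Tw le_rfl
      have : S.phi (τk + Tw) t0 x0 u = S.phi (t0 + (k+1:ℕ)*Tw) t0 x0 u := by
        congr 1
        push_cast; ring
      rw [this] at hb
      calc ‖S.phi (t0 + (k+1:ℕ)*Tw) t0 x0 u‖ ≤ β₀ ‖S.phi τk t0 x0 u‖ (τk + Tw - τk) + μ/2 := hb
      _ ≤ μ/2 + μ/2 := by linarith
      _ = μ := by ring
  -- general t
  set k : ℕ := ⌊(t - t0)/Tw⌋₊ with hk
  have htt0 : (0:ℝ) ≤ t - t0 := by linarith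
  have hk1 : (k:ℝ)*Tw ≤ t - t0 := by
    rw [hk]
    calc (⌊(t - t0)/Tw⌋₊ : ℝ) * Tw ≤ ((t-t0)/Tw) * Tw := by
          apply mul_le_mul_of_nonneg_right _ hTw.le
          exact Nat.floor_le (by positivity)
    _ = t - t0 := by field_simp
  have hk2 : t - t0 < ((k:ℝ)+1)*Tw := by
    rw [hk]
    have := Nat.lt_floor_add_one ((t-t0)/Tw)
    calc t - t0 = ((t-t0)/Tw) * Tw := by field_simp
    _ < (⌊(t - t0)/Tw⌋₊ + 1) * Tw := by
          apply mul_lt_mul_of_pos_right this hTw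
  set τk : ℝ := t0 + k*Tw with hτk
  have hτk0 : (0:ℝ) ≤ τk := by
    have : (0:ℝ) ≤ (k:ℝ)*Tw := by positivity
    linarith
  have hb := hSL τk hτk0 _ ((hind k).trans hμ1) u hu hnu' t
    ⟨by linarith, by linarith⟩
  have heq : S.phi t τk (S.phi τk t0 x0 u) u = S.phi t t0 x0 u :=
    restart hu ht0 (le_add_of_nonneg_right (by positivity)) (by linarith) x0
  rw [heq] at hb
  have h1 : β₀ ‖S.phi τk t0 x0 u‖ (t - τk) ≤ β₀ μ (t - τk) :=
    hβ.mono_r (norm_nonneg _) (hind k) (by linarith)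
  have h2 : β₀ μ (t - τk) ≤ β₀ μ 0 := hβ.anti_t hμ.le le_rfl (by linarith)
  linarith

def gainSet (S : Sys X Uv) (nrm : (ℝ → Uv) → ENNReal) (v : ℝ) : Set ℝ :=
  {ε | 0 < ε ∧ Pstab S nrm v ε}

noncomputable def gfun (S : Sys X Uv) (nrm : (ℝ → Uv) → ENNReal) (v : ℝ) : ℝ :=
  sInf (gainSet S nrm v)

lemma gainSet_anti {v' v : ℝ} (h : v' ≤ v) : gainSet S nrm v ⊆ gainSet S nrm v' :=
  fun _ hx => ⟨hx.1, Pstab_anti h hx.2⟩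

lemma gainSet_bddBelow (v : ℝ) : BddBelow (gainSet S nrm v) :=
  ⟨0, fun _ hx => hx.1.le⟩

lemma gfun_nonneg (v : ℝ) : 0 ≤ gfun S nrm v :=
  Real.sInf_nonneg fun _ hx => hx.1.le

lemma gfun_le {v ε : ℝ} (hε : 0 < ε) (hP : Pstab S nrm v ε) : gfun S nrm v ≤ ε :=
  csInf_le (gainSet_bddBelow v) ⟨hε, hP⟩

lemma gfun_mono {v1 v2 : ℝ} (h : v1 ≤ v2) (hne : (gainSet S nrm v2).Nonempty) :
    gfun S nrm v1 ≤ gfun S nrm v2 :=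
  csInf_le_csInf (gainSet_bddBelow v1) hne (gainSet_anti h)

lemma gfun_bound {v : ℝ} (hne : (gainSet S nrm v).Nonempty)
    {t0 : ℝ} (ht0 : 0 ≤ t0) {x0 : X} (hx0 : ‖x0‖ ≤ v) {u : ℝ → Uv} (hu : u ∈ S.U)
    (hnu : nrm u ≤ ENNReal.ofReal v) {t : ℝ} (ht : t0 ≤ t) :
    ‖S.phi t t0 x0 u‖ ≤ gfun S nrm v := by
  by_contra hcon
  push_neg at hcon
  obtain ⟨ε, ⟨hε, hP⟩, hlt⟩ := (csInf_lt_iff (gainSet_bddBelow v) hne).mp hcon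
  exact absurd (hP t0 ht0 x0 hx0 u hu hnu t ht) (not_le.mpr hlt)

/-- The fixed "gain core" function. -/
noncomputable def Gam (S : Sys X Uv) (nrm : (ℝ → Uv) → ENNReal)
    (c : ℝ) (α₀ ρ₀ : ℝ → ℝ) (vstar : ℝ) : ℝ → ℝ :=
  fun s => s + ρ₀ s + gfun S nrm (min s vstar) + (if vstar < s then c + α₀ s + ρ₀ s else 0)

lemma Gam_nonneg (hαK : ClassK α₀) (hρK : ClassK ρ₀) (hc : 0 ≤ c)
    {vstar : ℝ} (hvs : 0 < vstar) {s : ℝ} (hs : 0 ≤ s) :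
    0 ≤ Gam S nrm c α₀ ρ₀ vstar s := by
  unfold Gam
  have h1 := hρK.nonneg hs
  have h2 := gfun_nonneg (S := S) (nrm := nrm) (min s vstar)
  have h3 : (0:ℝ) ≤ if vstar < s then c + α₀ s + ρ₀ s else 0 := by
    split_ifs with h
    · have := hαK.nonneg hs; linarith
    · exact le_refl _
  linarith

lemma rho_le_Gam (hαK : ClassK α₀) (hρK : ClassK ρ₀) (hc : 0 ≤ c)
    {vstar : ℝ} (hvs : 0 < vstar) {s : ℝ} (hs : 0 ≤ s) :
    ρ₀ s ≤ Gam S nrm c α₀ ρ₀ vstar s := by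
  unfold Gam
  have h2 := gfun_nonneg (S := S) (nrm := nrm) (min s vstar)
  have h3 : (0:ℝ) ≤ if vstar < s then c + α₀ s + ρ₀ s else 0 := by
    split_ifs with h
    · have := hαK.nonneg hs; have := hρK.nonneg hs; linarith
    · exact le_refl _
  linarith

lemma tail_bound
    (hU : ∀ t0 ≥ (0:ℝ), ∀ x0 : X, ∀ u ∈ S.U, nrm u < ⊤ → ∀ t ≥ t0,
      ‖S.phi t t0 x0 u‖ ≤ c + α₀ ‖x0‖ + ρ₀ (nrm u).toReal)
    (hαK : ClassK α₀) (hρK : ClassK ρ₀) (hc : 0 ≤ c)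
    {vstar : ℝ} (hvs : 0 < vstar) (hP1 : Pstab S nrm vstar 1)
    {μ ε : ℝ} (hμ : 0 < μ) (hμv : μ ≤ vstar) (hgμ : gfun S nrm μ ≤ ε) (hε : 0 < ε)
    {τ' : ℝ} (hτ' : 0 ≤ τ') {y : X} (hy : ‖y‖ ≤ μ) {w : ℝ → Uv} (hw : w ∈ S.U)
    {s : ℝ} (hs : 0 ≤ s) (hnw : nrm w ≤ ENNReal.ofReal s)
    {t : ℝ} (ht : τ' ≤ t) :
    ‖S.phi t τ' y w‖ ≤ ε + Gam S nrm c α₀ ρ₀ vstar s := by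
  have hne : ∀ v', 0 < v' → v' ≤ vstar → (gainSet S nrm v').Nonempty :=
    fun v' _ hvv => ⟨1, one_pos, Pstab_anti hvv hP1⟩
  have hΓ0 := Gam_nonneg (S := S) (nrm := nrm) hαK hρK hc hvs hs
  rcases le_or_gt s μ with hsμ | hsμ
  · -- small tail
    have hb := gfun_bound (hne μ hμ hμv) hτ' hy hw
      (hnw.trans (ENNReal.ofReal_le_ofReal hsμ)) ht
    linarith
  rcases le_or_gt s vstar with hsv | hsv
  · -- medium tail
    have hb := gfun_bound (hne s (hμ.trans hsμ) hsv) hτ' (hy.trans hsμ.le) hw hnw ht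
    have heq : gfun S nrm s = gfun S nrm (min s vstar) := by rw [min_eq_left hsv]
    unfold Gam
    have hρ := hρK.nonneg hs
    have h3 : (0:ℝ) ≤ if vstar < s then c + α₀ s + ρ₀ s else 0 := by
      rw [if_neg (not_lt.mpr hsv)]
    rw [heq] at hb
    linarith
  · -- large tail: UGB
    have hfin : nrm w < ⊤ := lt_of_le_of_lt hnw ENNReal.ofReal_lt_top
    have hb := hU τ' hτ' y w hw hfin t ht
    have h1 : α₀ ‖y‖ ≤ α₀ s := hαK.mono (norm_nonneg y) (by linarith)
    have h2 : ρ₀ (nrm w).toReal ≤ ρ₀ s :=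
      hρK.mono ENNReal.toReal_nonneg (ENNReal.toReal_le_of_le_ofReal hs hnw)
    have hg := gfun_nonneg (S := S) (nrm := nrm) (min s vstar)
    unfold Gam
    rw [if_pos hsv]
    have hρ := hρK.nonneg hs
    linarith

lemma small_est
    (hU : ∀ t0 ≥ (0:ℝ), ∀ x0 : X, ∀ u ∈ S.U, nrm u < ⊤ → ∀ t ≥ t0,
      ‖S.phi t t0 x0 u‖ ≤ c + α₀ ‖x0‖ + ρ₀ (nrm u).toReal)
    (hαK : ClassK α₀) (hρK : ClassK ρ₀) (hc : 0 ≤ c)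
    {vstar : ℝ} (hvs : 0 < vstar) (hP1 : Pstab S nrm vstar 1)
    (hd : ∀ ε > (0:ℝ), ∃ δ, 0 < δ ∧ δ ≤ min ε 1 ∧ Pstab S nrm δ ε)
    {ε : ℝ} (hε : 0 < ε) :
    ∃ δ' > (0:ℝ), ∀ t0 ≥ (0:ℝ), ∀ x0 : X, ‖x0‖ ≤ δ' → ∀ u ∈ S.U, nrm u < ⊤ →
      ∀ t ≥ t0, ‖S.phi t t0 x0 u‖ ≤ ε + Gam S nrm c α₀ ρ₀ vstar ((nrm u).toReal) := by
  obtain ⟨δd, hδd, hδd2, hPd⟩ := hd ε hε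
  have hne : ∀ v', 0 < v' → v' ≤ vstar → (gainSet S nrm v').Nonempty :=
    fun v' _ hvv => ⟨1, one_pos, Pstab_anti hvv hP1⟩
  refine ⟨min δd vstar, by positivity, ?_⟩
  intro t0 ht0 x0 hx0 u hu hfin t ht
  set s : ℝ := (nrm u).toReal with hsdef
  have hs : 0 ≤ s := ENNReal.toReal_nonneg
  have hofr : nrm u = ENNReal.ofReal s := (ENNReal.ofReal_toReal hfin.ne).symm
  have hΓ0 := Gam_nonneg (S := S) (nrm := nrm) hαK hρK hc hvs hs
  rcases le_or_gt s (min δd vstar) with hsδ | hsδ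
  · have hb := hPd t0 ht0 x0 (hx0.trans (min_le_left _ _)) u hu
      (by rw [hofr]; exact ENNReal.ofReal_le_ofReal (hsδ.trans (min_le_left _ _))) t ht
    linarith
  rcases le_or_gt s vstar with hsv | hsv
  · have h0s : 0 < s := lt_of_le_of_lt (by positivity) hsδ
    have hb := gfun_bound (hne s h0s hsv) ht0 (hx0.trans hsδ.le) hu
      (by rw [hofr]) ht
    have heq : gfun S nrm s = gfun S nrm (min s vstar) := by rw [min_eq_left hsv]
    unfold Gam
    have hρ := hρK.nonneg hs
    have h3 : (0:ℝ) ≤ if vstar < s then c + α₀ s + ρ₀ s else 0 := by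
      rw [if_neg (not_lt.mpr hsv)]
    rw [heq] at hb
    linarith
  · have hb := hU t0 ht0 x0 u hu hfin t ht
    have h1 : α₀ ‖x0‖ ≤ α₀ s :=
      hαK.mono (norm_nonneg x0) (hx0.trans ((min_le_right _ _).trans hsv.le))
    have hg := gfun_nonneg (S := S) (nrm := nrm) (min s vstar)
    have hρ := hρK.nonneg hs
    unfold Gam
    rw [if_pos hsv]
    linarith

lemma zero_est
    (hU : ∀ t0 ≥ (0:ℝ), ∀ x0 : X, ∀ u ∈ S.U, nrm u < ⊤ → ∀ t ≥ t0,
      ‖S.phi t t0 x0 u‖ ≤ c + α₀ ‖x0‖ + ρ₀ (nrm u).toReal)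
    (hαK : ClassK α₀) (hρK : ClassK ρ₀) (hc : 0 ≤ c)
    {vstar : ℝ} (hvs : 0 < vstar) (hP1 : Pstab S nrm vstar 1)
    (hd : ∀ ε > (0:ℝ), ∃ δ, 0 < δ ∧ δ ≤ min ε 1 ∧ Pstab S nrm δ ε)
    {t0 : ℝ} (ht0 : 0 ≤ t0) {x0 : X} (hx0 : ‖x0‖ ≤ 0) {u : ℝ → Uv} (hu : u ∈ S.U)
    (hfin : nrm u < ⊤) {t : ℝ} (ht : t0 ≤ t) :
    ‖S.phi t t0 x0 u‖ ≤ Gam S nrm c α₀ ρ₀ vstar ((nrm u).toReal) := by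
  have hne : ∀ v', 0 < v' → v' ≤ vstar → (gainSet S nrm v').Nonempty :=
    fun v' _ hvv => ⟨1, one_pos, Pstab_anti hvv hP1⟩
  set s : ℝ := (nrm u).toReal with hsdef
  have hs : 0 ≤ s := ENNReal.toReal_nonneg
  have hofr : nrm u = ENNReal.ofReal s := (ENNReal.ofReal_toReal hfin.ne).symm
  rcases eq_or_lt_of_le hs with h0s | h0s
  · -- s = 0 : trajectory is bounded by every ε
    have hb : ∀ ε, 0 < ε → ‖S.phi t t0 x0 u‖ ≤ ε := by
      intro ε hε
      obtain ⟨δd, hδd, _, hPd⟩ := hd ε hε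
      exact hPd t0 ht0 x0 (hx0.trans hδd.le) u hu
        (by rw [hofr, ← h0s]; simp) t ht
    have hb0 : ‖S.phi t t0 x0 u‖ ≤ 0 := le_of_forall_pos_le_add (by
      intro ε hε; simpa using hb ε hε)
    exact hb0.trans (Gam_nonneg (S := S) (nrm := nrm) hαK hρK hc hvs hs)
  rcases le_or_gt s vstar with hsv | hsv
  · have hb := gfun_bound (hne s h0s hsv) ht0 (hx0.trans h0s.le) hu (by rw [hofr]) ht
    have heq : gfun S nrm s = gfun S nrm (min s vstar) := by rw [min_eq_left hsv]
    unfold Gam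
    have hρ := hρK.nonneg hs
    have h3 : (0:ℝ) ≤ if vstar < s then c + α₀ s + ρ₀ s else 0 := by
      rw [if_neg (not_lt.mpr hsv)]
    rw [heq] at hb
    linarith
  · have hb := hU t0 ht0 x0 u hu hfin t ht
    have h1 : α₀ ‖x0‖ ≤ α₀ s := hαK.mono (norm_nonneg x0) (hx0.trans (by linarith))
    have hg := gfun_nonneg (S := S) (nrm := nrm) (min s vstar)
    have hρ := hρK.nonneg hs
    unfold Gam
    rw [if_pos hsv]
    linarith

set_option maxHeartbeats 1000000 in
lemma main_decay (hadm : IsAdmissible S nrm) (hE : CondE S nrm)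
    (hA1 : AssumptionA1 S nrm) (hβ : ClassKL β₀)
    (hG : ∀ t0 ≥ (0:ℝ), ∀ x0 : X, ∀ t ≥ t0, ‖S.phi t t0 x0 (fun _ => 0)‖ ≤ β₀ ‖x0‖ (t - t0))
    (hU : ∀ t0 ≥ (0:ℝ), ∀ x0 : X, ∀ u ∈ S.U, nrm u < ⊤ → ∀ t ≥ t0,
      ‖S.phi t t0 x0 u‖ ≤ c + α₀ ‖x0‖ + ρ₀ (nrm u).toReal)
    (hαK : ClassK α₀) (hρK : ClassK ρ₀) (hc : 0 ≤ c)
    {vstar : ℝ} (hvs : 0 < vstar) (hP1 : Pstab S nrm vstar 1)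
    (hd : ∀ ε > (0:ℝ), ∃ δ, 0 < δ ∧ δ ≤ min ε 1 ∧ Pstab S nrm δ ε)
    {r ε : ℝ} (hr : 0 < r) (hε : 0 < ε) :
    ∃ T > (0:ℝ), ∀ t0 ≥ (0:ℝ), ∀ x0 : X, ‖x0‖ ≤ r → ∀ u ∈ S.U, nrm u < ⊤ →
      ∀ t ≥ t0 + T, ‖S.phi t t0 x0 u‖ ≤ ε + Gam S nrm c α₀ ρ₀ vstar ((nrm u).toReal) := by
  set sbar : ℝ := max vstar (c + α₀ r) with hsbar
  have hsbar0 : 0 < sbar := lt_of_lt_of_le hvs (le_max_left _ _)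
  have hαr : 0 ≤ α₀ r := hαK.nonneg hr.le
  set R : ℝ := c + α₀ r + ρ₀ sbar + 1 with hR
  have hρsbar : 0 ≤ ρ₀ sbar := hρK.nonneg hsbar0.le
  have hRpos : 0 < R := by rw [hR]; linarith
  obtain ⟨δd, hδd, hδd2, hPd⟩ := hd ε hε
  set μ : ℝ := min δd vstar with hμdef
  have hμ : 0 < μ := by positivity
  have hμv : μ ≤ vstar := min_le_right _ _
  have hμε : μ ≤ ε := ((min_le_left _ _).trans (hδd2.trans (min_le_left _ _)))
  have hgμ : gfun S nrm μ ≤ ε := gfun_le hε (Pstab_anti (min_le_left _ _) hPd)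
  obtain ⟨Tw, hTw, hTw2⟩ := hβ.decay hRpos.le (by linarith : (0:ℝ) < μ/2)
  obtain ⟨δw, hδw, hδw1, hSL⟩ := SL1 hA1 hβ hG hU hαK hρK hc hRpos
    (by linarith : (0:ℝ) < μ/2) hTw
  set N : ℕ := ⌈sbar / δw⌉₊ with hN
  refine ⟨(N + 2) * Tw, by positivity, ?_⟩
  intro t0 ht0 x0 hx0 u hu hfin t ht
  set s : ℝ := (nrm u).toReal with hsdef
  have hs : 0 ≤ s := ENNReal.toReal_nonneg
  have hofr : nrm u = ENNReal.ofReal s := (ENNReal.ofReal_toReal hfin.ne).symm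
  have hΓ0 := Gam_nonneg (S := S) (nrm := nrm) hαK hρK hc hvs hs
  rcases lt_or_ge sbar s with hsb | hsb
  · -- very large input: UGB alone suffices
    have hb := hU t0 ht0 x0 u hu hfin t (by nlinarith)
    have h1 : α₀ ‖x0‖ ≤ α₀ r := hαK.mono (norm_nonneg x0) hx0
    have h2 : c + α₀ r ≤ sbar := le_max_right _ _
    have hg := gfun_nonneg (S := S) (nrm := nrm) (min s vstar)
    have h3 : (0:ℝ) ≤ if vstar < s then c + α₀ s + ρ₀ s else 0 := by
      split_ifs with h
      · have := hαK.nonneg hs; have := hρK.nonneg hs; linarith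
      · exact le_refl _
    unfold Gam
    linarith
  -- moderate input: window argument
  have hsmax : s + δw ≤ (N+1) * δw := by
    have h1 : sbar / δw ≤ N := Nat.le_ceil _
    have h2 : sbar ≤ N * δw := by
      rw [div_le_iff₀ hδw] at h1
      linarith
    nlinarith
  set a : ℝ := t0 + Tw with ha
  have hapos : 0 < a := by rw [ha]; linarith
  obtain ⟨k, hkN, hgood⟩ := good_window hadm hE hu hfin hapos hTw hδw N hsmax
  set τ : ℝ := a + k * Tw with hτdef
  set τ' : ℝ := τ + Tw with hτ'def
  have hτpos : 0 < τ := by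
    have : (0:ℝ) ≤ (k:ℝ) * Tw := by positivity
    rw [hτdef]; linarith
  have ht0τ : t0 ≤ τ := by
    have : (0:ℝ) ≤ (k:ℝ) * Tw := by positivity
    rw [hτdef, ha]; linarith
  have hττ' : τ < τ' := by rw [hτ'def]; linarith
  have hτ't : τ' ≤ t := by
    have hkN' : (k:ℝ) ≤ N := by exact_mod_cast hkN
    have : τ' = t0 + ((k:ℝ) + 2) * Tw := by rw [hτ'def, hτdef, ha]; ring
    rw [this]
    have h2 : ((k:ℝ) + 2) * Tw ≤ ((N:ℝ) + 2) * Tw := by nlinarith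
    calc t0 + ((k:ℝ)+2) * Tw ≤ t0 + ((N:ℝ)+2) * Tw := by linarith
    _ ≤ t := by exact_mod_cast ht
  -- state at start of good window is ≤ R
  set y : X := S.phi τ t0 x0 u with hy
  have hyR : ‖y‖ ≤ R := by
    have hb := hU t0 ht0 x0 u hu hfin τ ht0τ
    have h1 : α₀ ‖x0‖ ≤ α₀ r := hαK.mono (norm_nonneg x0) hx0
    have h2 : ρ₀ s ≤ ρ₀ sbar := hρK.mono hs hsb
    rw [hR]; rw [hy]; linarith
  -- truncated window input
  set w : ℝ → Uv := trunc u τ τ' with hw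
  have hwU : w ∈ S.U := trunc_mem hu hτpos hττ'
  have hwsmall : nrm w ≤ ENNReal.ofReal δw := by
    rw [hw, show τ' = a + ((k:ℝ)+1)*Tw from by rw [hτ'def, hτdef]; ring]
    exact hgood
  -- one-window decay
  have hb := hSL τ hτpos.le y hyR w hwU hwsmall τ' ⟨hττ'.le, le_refl _⟩
  have hcaus : S.phi τ' τ y w = S.phi τ' τ y u := by
    apply S.causality τ τ' y u w hτpos.le hττ' hu hwU
    intro rr h1 h2
    rw [hw]
    simp only [trunc]
    rw [if_pos ⟨h1, h2⟩]
  have hrest : S.phi τ' τ (S.phi τ t0 x0 u) u = S.phi τ' t0 x0 u :=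
    restart hu ht0 ht0τ (by linarith) x0
  have hxτ' : ‖S.phi τ' t0 x0 u‖ ≤ μ := by
    rw [← hrest, ← hy, ← hcaus]
    have h1 : β₀ ‖y‖ (τ' - τ) ≤ β₀ R Tw := by
      rw [show τ' - τ = Tw by rw [hτ'def]; ring]
      exact hβ.mono_r (norm_nonneg _) hyR hTw.le
    have h2 : β₀ R Tw ≤ μ/2 := hTw2 Tw le_rfl
    linarith
  -- tail input
  set wt : ℝ → Uv := truncFrom u τ' with hwt
  have hwtU : wt ∈ S.U := truncFrom_mem hu (by linarith)
  have hwtle : nrm wt ≤ ENNReal.ofReal s := by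
    rw [← hofr]
    exact hadm.tail_le u hu τ' (by linarith)
  rcases eq_or_lt_of_le hτ't with rfl | hτ't'
  · -- t = τ'
    calc ‖S.phi τ' t0 x0 u‖ ≤ μ := hxτ'
    _ ≤ ε + _ := by linarith
  · -- t > τ'
    have hrest2 : S.phi t τ' (S.phi τ' t0 x0 u) u = S.phi t t0 x0 u :=
      restart hu ht0 (by linarith) hτ't'.le x0
    have hcaus2 : S.phi t τ' (S.phi τ' t0 x0 u) wt = S.phi t τ' (S.phi τ' t0 x0 u) u := by
      apply S.causality τ' t _ u wt (by linarith) hτ't' hu hwtU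
      intro rr h1 h2
      rw [hwt]
      simp only [truncFrom]
      rw [if_pos h1]
    rw [← hrest2, ← hcaus2]
    exact tail_bound hU hαK hρK hc hvs hP1 hμ hμv hgμ hε (by linarith) hxτ'
      hwtU hs hwtle (by linarith)
end Core

section Final
variable {S : Sys X Uv} {nrm : (ℝ → Uv) → ENNReal}

lemma easy_direction (hadm : IsAdmissible S nrm) (hISS : ISS S nrm) :
    ZeroGUAS S ∧ UGB S nrm := by
  obtain ⟨β, ρ, hβ, hρ, hest⟩ := hISS
  have hρ0 : ρ 0 = 0 := hρ.1.2.2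
  constructor
  · refine ⟨β, hβ, ?_⟩
    intro t0 ht0 x0 t ht
    have h1 := hest t0 ht0 x0 _ S.zero_mem (by rw [hadm.zero]; exact ENNReal.zero_lt_top) t ht
    rw [hadm.zero] at h1
    simpa [hρ0] using h1
  · refine ⟨0, fun r => β r 0 + r, ρ, le_refl 0, ?_, hρ, ?_⟩
    · constructor
      · refine ⟨?_, ?_, ?_⟩
        · exact ((hβ.1 0 le_rfl).1.add (continuous_id.continuousOn))
        · intro a ha b hb hab
          have h1 : β a 0 ≤ β b 0 := hβ.mono_r ha hab.le le_rfl
          simp only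
          linarith
        · simp [(hβ.1 0 le_rfl).2.2]
      · apply tendsto_atTop_mono' atTop ?_ tendsto_id
        filter_upwards [eventually_ge_atTop (0:ℝ)] with x hx
        have := hβ.nonneg hx (le_refl 0)
        simp only [id]
        linarith
    · intro t0 ht0 x0 u hu hfin t ht
      have h1 := hest t0 ht0 x0 u hu hfin t ht
      have h2 : β ‖x0‖ (t - t0) ≤ β ‖x0‖ 0 := hβ.anti_t (norm_nonneg _) le_rfl (by linarith)
      have h3 : (0:ℝ) ≤ ‖x0‖ := norm_nonneg _
      simp only [zero_add]
      linarith

set_option maxHeartbeats 2000000 in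
lemma hard_direction (hadm : IsAdmissible S nrm) (hE : CondE S nrm)
    (hA1 : AssumptionA1 S nrm) (hZG : ZeroGUAS S) (hUGB : UGB S nrm) : ISS S nrm := by
  obtain ⟨β₀, hβ, hG⟩ := hZG
  obtain ⟨c, α₀, ρ₀, hc, hαKI, hρKI, hU⟩ := hUGB
  have hαK : ClassK α₀ := hαKI.1
  have hρK : ClassK ρ₀ := hρKI.1
  -- stability: for every ε there is δ
  have hd : ∀ ε > (0:ℝ), ∃ δ, 0 < δ ∧ δ ≤ min ε 1 ∧ Pstab S nrm δ ε :=
    fun ε hε => stab_small hA1 hβ hG hU hαK hρK hc hε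
  obtain ⟨vstar, hvs, hvsle, hP1⟩ := hd 1 one_pos
  set Γ : ℝ → ℝ := Gam S nrm c α₀ ρ₀ vstar with hΓdef
  have hne : ∀ v', 0 < v' → v' ≤ vstar → (gainSet S nrm v').Nonempty :=
    fun v' _ hvv => ⟨1, one_pos, Pstab_anti hvv hP1⟩
  -- the capped gain function
  set gbar : ℝ → ℝ := fun v => gfun S nrm (min v vstar) with hgbar
  have hgbar_mono : MonotoneOn gbar (Ici 0) := by
    intro a _ b _ hab
    exact gfun_mono (min_le_min_right _ hab)
      ⟨1, one_pos, Pstab_anti (min_le_right _ _) hP1⟩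
  have hgbar_nonneg : ∀ v, 0 ≤ v → 0 ≤ gbar v := fun v _ => gfun_nonneg _
  have hgbar_small : ∀ ε > (0:ℝ), ∃ δ > (0:ℝ), ∀ v, 0 ≤ v → v ≤ δ → gbar v ≤ ε := by
    intro ε hε
    obtain ⟨δd, hδd, _, hPd⟩ := hd ε hε
    refine ⟨δd, hδd, fun v hv hvδ => ?_⟩
    exact gfun_le hε (Pstab_anti ((min_le_left _ _).trans hvδ) hPd)
  have hgfun0 : gfun S nrm 0 = 0 := by
    apply le_antisymm _ (gfun_nonneg _)
    apply le_of_forall_pos_le_add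
    intro ε hε
    obtain ⟨δd, hδd, _, hPd⟩ := hd ε hε
    have := gfun_le hε (Pstab_anti hδd.le hPd)
    linarith
  -- the input gain ρ
  set ρ : ℝ → ℝ := fun s =>
    s + ρ₀ s + min (s/vstar) 1 * (c + α₀ s + ρ₀ s) + Av gbar s with hρdef
  have hΓρ : ∀ s, 0 ≤ s → Γ s ≤ ρ s := by
    intro s hs
    have h1 : gfun S nrm (min s vstar) ≤ Av gbar s := by
      rcases eq_or_lt_of_le hs with h0 | h0
      · rw [← h0]
        rw [show Av gbar 0 = 0 from by unfold Av; rw [if_pos le_rfl]]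
        rw [show min (0:ℝ) vstar = 0 from min_eq_left hvs.le, hgfun0]
      · exact le_Av hgbar_mono h0
    have h2 : (if vstar < s then c + α₀ s + ρ₀ s else 0)
        ≤ min (s/vstar) 1 * (c + α₀ s + ρ₀ s) := by
      have hbr : 0 ≤ c + α₀ s + ρ₀ s := by
        have := hαK.nonneg hs; have := hρK.nonneg hs; linarith
      split_ifs with h
      · have : min (s/vstar) 1 = 1 := by
          rw [min_eq_right]
          rw [le_div_iff₀ hvs]
          linarith
        rw [this, one_mul]
      · have hm0 : 0 ≤ min (s/vstar) 1 := le_min (by positivity) zero_le_one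
        positivity
    rw [hρdef, hΓdef]
    unfold Gam
    simp only
    linarith
  have hρKI2 : ClassKInf ρ := by
    constructor
    · refine ⟨?_, ?_, ?_⟩
      · apply ContinuousOn.add
        apply ContinuousOn.add
        apply ContinuousOn.add
        · exact continuous_id.continuousOn
        · exact hρK.1
        · apply ContinuousOn.mul
          · exact ((continuous_id.div_const vstar).min continuous_const).continuousOn
          · exact (continuousOn_const.add hαK.1).add hρK.1
        · exact Av_contOn hgbar_mono hgbar_nonneg hgbar_small
      · intro a ha b hb hab
        simp only [hρdef]
        have h1 : ρ₀ a ≤ ρ₀ b := hρK.mono ha hab.le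
        have h1' : α₀ a ≤ α₀ b := hαK.mono ha hab.le
        have hbra : 0 ≤ c + α₀ a + ρ₀ a := by
          have := hαK.nonneg ha; have := hρK.nonneg ha; linarith
        have hmb : 0 ≤ min (b/vstar) 1 := by
          have : (0:ℝ) ≤ b := le_trans ha hab.le
          exact le_min (by positivity) zero_le_one
        have h2 : min (a/vstar) 1 * (c + α₀ a + ρ₀ a) ≤ min (b/vstar) 1 * (c + α₀ b + ρ₀ b) := by
          apply mul_le_mul _ (by linarith) hbra hmb
          exact min_le_min_right _ (by gcongr)
        have h3 : Av gbar a ≤ Av gbar b := Av_mono hgbar_mono hgbar_nonneg ha hb hab.le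
        linarith
      · simp only [hρdef]
        rw [hρK.2.2, zero_div, min_eq_left zero_le_one]
        rw [show Av gbar 0 = 0 from by unfold Av; rw [if_pos le_rfl]]
        ring
    · apply tendsto_atTop_mono' atTop ?_ tendsto_id
      filter_upwards [eventually_ge_atTop (0:ℝ)] with x hx
      have h1 := hρK.nonneg hx
      have h2 : 0 ≤ min (x/vstar) 1 * (c + α₀ x + ρ₀ x) := by
        have := hαK.nonneg hx
        have hm0 : 0 ≤ min (x/vstar) 1 := le_min (by positivity) zero_le_one
        positivity
      have h3 := Av_nonneg hgbar_mono hgbar_nonneg x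
      simp only [id, hρdef]
      linarith
  -- the transient sup function
  set Gset : ℝ → ℝ → Set ℝ := fun rr τ =>
    insert 0 {z | ∃ t0 x0 u t, 0 ≤ t0 ∧ t0 ≤ t ∧ t0 + τ ≤ t ∧ ‖x0‖ ≤ rr ∧ u ∈ S.U ∧
      nrm u < ⊤ ∧ z = ‖S.phi t t0 x0 u‖ - Γ ((nrm u).toReal)} with hGset
  set Gs : ℝ → ℝ → ℝ := fun rr τ => sSup (Gset rr τ) with hGs
  have hBdd : ∀ rr τ, ∀ z ∈ Gset rr τ, z ≤ c + α₀ (max rr 0) := by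
    intro rr τ z hz
    rcases hz with rfl | ⟨t0, x0, u, t, ht0, ht, hτ, hx0, hu, hfin, rfl⟩
    · have := hαK.nonneg (le_max_right rr 0); linarith
    · have hs : (0:ℝ) ≤ (nrm u).toReal := ENNReal.toReal_nonneg
      have hb := hU t0 ht0 x0 u hu hfin t ht
      have h1 : α₀ ‖x0‖ ≤ α₀ (max rr 0) :=
        hαK.mono (norm_nonneg x0) (hx0.trans (le_max_left _ _))
      have h2 := rho_le_Gam (S := S) (nrm := nrm) hαK hρK hc hvs hs
      rw [hΓdef]
      linarith
  have hBdd' : ∀ rr τ, BddAbove (Gset rr τ) := fun rr τ => ⟨_, fun z hz => hBdd rr τ z hz⟩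
  have hGnn : ∀ rr τ, 0 ≤ Gs rr τ := fun rr τ =>
    le_csSup (hBdd' rr τ) (mem_insert 0 _)
  have hGpt : ∀ t0 ≥ (0:ℝ), ∀ x0 : X, ∀ u ∈ S.U, nrm u < ⊤ → ∀ t ≥ t0,
      ‖S.phi t t0 x0 u‖ - Γ ((nrm u).toReal) ≤ Gs ‖x0‖ (t - t0) := by
    intro t0 ht0 x0 u hu hfin t ht
    apply le_csSup (hBdd' _ _)
    exact mem_insert_of_mem _ ⟨t0, x0, u, t, ht0, ht, by linarith, le_rfl, hu, hfin, rfl⟩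
  have hGmono : ∀ τ, MonotoneOn (fun v => Gs v τ) (Ici 0) := by
    intro τ a _ b _ hab
    apply csSup_le_csSup (hBdd' b τ) ⟨0, mem_insert 0 _⟩
    intro z hz
    rcases hz with rfl | ⟨t0, x0, u, t, ht0, ht, hτ, hx0, hu, hfin, rfl⟩
    · exact mem_insert 0 _
    · exact mem_insert_of_mem _ ⟨t0, x0, u, t, ht0, ht, hτ, hx0.trans hab, hu, hfin, rfl⟩
  have hGanti : ∀ v, ∀ τ1 τ2 : ℝ, τ1 ≤ τ2 → Gs v τ2 ≤ Gs v τ1 := by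
    intro v τ1 τ2 h12
    apply csSup_le_csSup (hBdd' v τ1) ⟨0, mem_insert 0 _⟩
    intro z hz
    rcases hz with rfl | ⟨t0, x0, u, t, ht0, ht, hτ, hx0, hu, hfin, rfl⟩
    · exact mem_insert 0 _
    · exact mem_insert_of_mem _ ⟨t0, x0, u, t, ht0, ht, by linarith, hx0, hu, hfin, rfl⟩
  have hGdecay : ∀ rr ≥ (0:ℝ), ∀ ε > (0:ℝ), ∃ T > (0:ℝ), ∀ τ ≥ T, Gs rr τ ≤ ε := by
    intro rr hrr ε hε
    obtain ⟨T, hT, hTest⟩ := main_decay hadm hE hA1 hβ hG hU hαK hρK hc hvs hP1 hd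
      (by linarith : (0:ℝ) < rr + 1) hε
    refine ⟨T, hT, fun τ hτ => ?_⟩
    apply csSup_le ⟨0, mem_insert 0 _⟩
    intro z hz
    rcases hz with rfl | ⟨t0, x0, u, t, ht0, ht, hτ2, hx0, hu, hfin, rfl⟩
    · exact hε.le
    · have := hTest t0 ht0 x0 (by linarith) u hu hfin t (by linarith)
      rw [hΓdef]
      linarith
  have hGsmall : ∀ ε > (0:ℝ), ∃ δ > (0:ℝ), ∀ rr, rr ≤ δ → ∀ τ, Gs rr τ ≤ ε := by
    intro ε hε
    obtain ⟨δ', hδ', hS⟩ := small_est hU hαK hρK hc hvs hP1 hd hε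
    refine ⟨δ', hδ', fun rr hrr τ => ?_⟩
    apply csSup_le ⟨0, mem_insert 0 _⟩
    intro z hz
    rcases hz with rfl | ⟨t0, x0, u, t, ht0, ht, hτ2, hx0, hu, hfin, rfl⟩
    · exact hε.le
    · have := hS t0 ht0 x0 (by linarith) u hu hfin t ht
      rw [hΓdef]
      linarith
  -- the KL function
  set β : ℝ → ℝ → ℝ := fun rr t => Av (fun v => Gs v t) rr + max rr 0 / (1 + max t 0)
    with hβdef
  have hβnn : ∀ rr t, 0 ≤ β rr t := by
    intro rr t
    simp only [hβdef]
    have h1 := Av_nonneg (hGmono t) (fun v _ => hGnn v t) rr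
    have h2 : (0:ℝ) ≤ max rr 0 / (1 + max t 0) := by positivity
    linarith
  have hβKL : ClassKL β := by
    constructor
    · intro t ht
      refine ⟨?_, ?_, ?_⟩
      · apply ContinuousOn.add
        · exact Av_contOn (hGmono t) (fun v _ => hGnn v t) (by
            intro ε hε
            obtain ⟨δ, hδ, hS⟩ := hGsmall ε hε
            exact ⟨δ, hδ, fun v _ hvδ => hS v hvδ t⟩)
        · apply ContinuousOn.div
          · exact (continuous_id.max continuous_const).continuousOn
          · exact continuousOn_const
          · intro x _
            have : (0:ℝ) ≤ max t 0 := le_max_right _ _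
            positivity
      · intro a ha b hb hab
        simp only [hβdef]
        have h1 : Av (fun v => Gs v t) a ≤ Av (fun v => Gs v t) b :=
          Av_mono (hGmono t) (fun v _ => hGnn v t) ha hb hab.le
        have h2 : max a 0 / (1 + max t 0) < max b 0 / (1 + max t 0) := by
          rw [max_eq_left ha, max_eq_left (le_trans ha hab.le)]
          have hK : (0:ℝ) < 1 + max t 0 := by
            have : (0:ℝ) ≤ max t 0 := le_max_right _ _
            linarith
          gcongr
        linarith
      · simp only [hβdef]
        rw [show Av (fun v => Gs v t) 0 = 0 from by unfold Av; rw [if_pos le_rfl]]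
        simp
    · intro rr hrr
      constructor
      · intro t1 ht1 t2 ht2 h12
        simp only [hβdef]
        have h1 : Av (fun v => Gs v t2) rr ≤ Av (fun v => Gs v t1) rr :=
          Av_mono_h (hGmono t2) (hGmono t1) (fun v _ => hGanti v t1 t2 h12) rr
        have h2 : max rr 0 / (1 + max t2 0) ≤ max rr 0 / (1 + max t1 0) := by
          apply div_le_div_of_nonneg_left (le_max_right rr 0)
          · have : (0:ℝ) ≤ max t1 0 := le_max_right _ _
            linarith
          · have h3 : max t1 0 ≤ max t2 0 := max_le_max h12 le_rfl
            linarith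
        linarith
      · rcases eq_or_lt_of_le hrr with h0 | h0
        · have hz : ∀ t : ℝ, β rr t = 0 := by
            intro t
            simp only [hβdef]
            rw [show Av (fun v => Gs v t) rr = 0 from by
              unfold Av; rw [if_pos (le_of_eq h0.symm)]]
            rw [max_eq_right (le_of_eq h0.symm), zero_div, add_zero]
          rw [show (fun t => β rr t) = (fun _ => (0:ℝ)) from funext hz]
          exact tendsto_const_nhds
        · rw [Metric.tendsto_atTop]
          intro ε hε
          obtain ⟨T, hT, hTd⟩ := hGdecay (2*rr) (by linarith) (ε/3) (by linarith)
          refine ⟨max T (3*rr/ε), fun t ht => ?_⟩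
          have ht1 : T ≤ t := le_trans (le_max_left _ _) ht
          have ht2 : 3*rr/ε ≤ t := le_trans (le_max_right _ _) ht
          have ht0 : 0 ≤ t := le_trans (by positivity) ht2
          rw [Real.dist_eq, sub_zero, abs_of_nonneg (hβnn rr t)]
          have h1 : Av (fun v => Gs v t) rr ≤ Gs (2*rr) t := Av_le (hGmono t) h0
          have h2 : Gs (2*rr) t ≤ ε/3 := hTd t ht1
          have h3 : max rr 0 / (1 + max t 0) ≤ ε/3 := by
            rw [max_eq_left hrr, max_eq_left ht0]
            rw [div_le_iff₀ (by linarith : (0:ℝ) < 1 + t)]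
            rw [div_le_iff₀ hε] at ht2  -- wrong, careful
            nlinarith
          simp only [hβdef]
          linarith
  -- conclusion
  refine ⟨β, ρ, hβKL, hρKI2, ?_⟩
  intro t0 ht0 x0 u hu hfin t ht
  have hs : (0:ℝ) ≤ (nrm u).toReal := ENNReal.toReal_nonneg
  have hΓρ' := hΓρ _ hs
  rcases eq_or_lt_of_le (norm_nonneg x0) with h0 | h0
  · have hz := zero_est hU hαK hρK hc hvs hP1 hd ht0 (le_of_eq h0.symm) hu hfin ht
    have hb := hβnn ‖x0‖ (t - t0)
    rw [hΓdef] at hΓρ'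
    linarith
  · have h1 := hGpt t0 ht0 x0 u hu hfin t ht
    have h2 : Gs ‖x0‖ (t - t0) ≤ Av (fun v => Gs v (t - t0)) ‖x0‖ :=
      le_Av (hGmono (t - t0)) h0
    have h3 : (0:ℝ) ≤ max ‖x0‖ 0 / (1 + max (t - t0) 0) := by positivity
    have h4 : ‖S.phi t t0 x0 u‖ ≤ Av (fun v => Gs v (t - t0)) ‖x0‖ + Γ ((nrm u).toReal) := by
      linarith
    have h5 : ‖S.phi t t0 x0 u‖ ≤ Av (fun v => Gs v (t - t0)) ‖x0‖ + ρ ((nrm u).toReal) := by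
      linarith
    have hββ : Av (fun v => Gs v (t - t0)) ‖x0‖ ≤ β ‖x0‖ (t - t0) := by
      simp only [hβdef]
      linarith [h3]
    linarith
end Final

/-- Theorem 3.3 (main result): for a forward complete system endowed with an admissible
functional satisfying condition (E) and satisfying Assumption 1, the combination
0-GUAS ∧ UBEBS is equivalent to iISS. -/
theorem zeroGUAS_and_UBEBS_iff_iISS (S : Sys X Uv) (nrm : (ℝ → Uv) → ENNReal)
    (hadm : IsAdmissible S nrm) (hE : CondE S nrm) (hA1 : AssumptionA1 S nrm) :
    (ZeroGUAS S ∧ UGB S nrm) ↔ ISS S nrm := by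
  constructor
  · intro h
    exact hard_direction hadm hE hA1 h.1 h.2
  · intro h
    exact easy_direction hadm h
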